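/- Let G be a σ-compact, uncountable locally compact abelian group, let K ⊆ G be a compact set with nonempty interior, and let μ be a pure point Radon measure on G. If μ is pseudo Bochner-type almost periodic with respect to the norm ‖ν‖_K := sup_{t ∈ G} |ν|(t + K), i.e. for every ε > 0 the set {t ∈ G : ‖T_t μ − μ‖_K < ε} is finitely relatively dense in G, then μ = 0. -/

import Mathlib

open Pointwise MeasureTheory ENNReal

/-- For pure point measures `μ, ν`, the quantity `‖μ − ν‖_K = sup_{r ∈ G} |μ − ν|(r + K)`:
for pure point measures the total variation of the difference is computed atomwise, and
`(a - b) + (b - a)` (truncated subtraction in `ℝ≥0∞`) is `|a - b|`. -/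
noncomputable def normK {G : Type*} [AddCommGroup G] [MeasurableSpace G]
    (K : Set G) (μ ν : Measure G) : ℝ≥0∞ :=
  ⨆ r : G, ∑' x : (r +ᵥ K : Set G),
    ((μ {(x : G)} - ν {(x : G)}) + (ν {(x : G)} - μ {(x : G)}))

/-- Let `G` be a σ-compact uncountable locally compact abelian group,
`K ⊆ G` compact with nonempty interior, and `μ` a pure point Radon measure on `G`. If `μ` is
pseudo Bochner-type almost periodic with respect to `‖·‖_K` (for every `ε > 0` the set
`{t : ‖T_t μ − μ‖_K < ε}` is finitely relatively dense in `G`), then `μ = 0`. -/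
theorem stmt18 {G : Type*}
    [AddCommGroup G] [TopologicalSpace G] [IsTopologicalAddGroup G]
    [LocallyCompactSpace G] [T2Space G] [SigmaCompactSpace G] [Uncountable G]
    [MeasurableSpace G] [BorelSpace G]
    (μ : Measure G) [μ.Regular]
    -- `μ` is pure point
    (hpp : ∀ A : Set G, MeasurableSet A → μ A = ∑' x : A, μ {(x : G)})
    (K : Set G) (hK : IsCompact K) (hKint : (interior K).Nonempty)
    -- `μ` is pseudo Bochner-type almost periodic for `‖·‖_K`
    (hap : ∀ ε > (0 : ℝ), ∃ F : Set G, F.Finite ∧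
      {t : G | normK K (Measure.map (fun x => t + x) μ) μ < ENNReal.ofReal ε} + F
        = Set.univ) :
    μ = 0 := by
  -- It suffices to show all atoms vanish.
  have hsing : ∀ x : G, μ {x} = 0 := by
    by_contra h
    push_neg at h
    obtain ⟨x₀, hx₀⟩ := h
    set c : ℝ≥0∞ := μ {x₀} with hc
    have hcfin : c ≠ ∞ := isCompact_singleton.measure_lt_top.ne
    have hcpos : 0 < c := pos_iff_ne_zero.mpr hx₀
    have hεpos : (0 : ℝ) < c.toReal / 2 := by
      have : 0 < c.toReal := ENNReal.toReal_pos hx₀ hcfin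
      linarith
    obtain ⟨F, hFfin, hPF⟩ := hap (c.toReal / 2) hεpos
    set P : Set G :=
      {t : G | normK K (Measure.map (fun x => t + x) μ) μ < ENNReal.ofReal (c.toReal / 2)}
      with hP
    have hofReal : ENNReal.ofReal (c.toReal / 2) = c / 2 := by
      rw [ENNReal.ofReal_div_of_pos two_pos, ENNReal.ofReal_toReal hcfin]
      norm_num
    -- P is uncountable
    have hPuncount : ¬ P.Countable := by
      intro hPc
      have : (P + F).Countable := hPc.image2 hFfin.countable _
      rw [hPF] at this
      exact (Set.not_countable_univ) this
    -- every t ∈ P gives an atom of mass > c/2 at t + x₀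
    have hatom : ∀ t ∈ P, c / 2 < μ {t + x₀} := by
      intro t ht
      obtain ⟨k, hk⟩ := hKint
      have hkK : k ∈ K := interior_subset hk
      have hmem : t + x₀ ∈ (t + x₀ - k) +ᵥ K := ⟨k, hkK, by simp only [vadd_eq_add]; abel⟩
      have hmap : Measure.map (fun x => t + x) μ {t + x₀} = c := by
        rw [Measure.map_apply (measurable_const_add t) (measurableSet_singleton _)]
        congr 1
        ext x
        simp [_root_.add_right_inj]
      set a : ℝ≥0∞ := μ {t + x₀} with ha
      have hterm : (c - a) + (a - c) ≤ normK K (Measure.map (fun x => t + x) μ) μ := by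
        refine le_trans ?_ (le_iSup _ (t + x₀ - k))
        have := ENNReal.le_tsum (f := fun x : ((t + x₀ - k) +ᵥ K : Set G) =>
          ((Measure.map (fun x => t + x) μ {(x : G)} - μ {(x : G)})
            + (μ {(x : G)} - Measure.map (fun x => t + x) μ {(x : G)})))
          ⟨t + x₀, hmem⟩
        simpa [hmap] using this
      have hlt : (c - a) + (a - c) < c / 2 := by
        calc (c - a) + (a - c) ≤ normK K (Measure.map (fun x => t + x) μ) μ := hterm
        _ < ENNReal.ofReal (c.toReal / 2) := ht
        _ = c / 2 := hofReal
      by_contra hle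
      push_neg at hle
      have h1 : c / 2 ≤ c - a := by
        have := tsub_le_tsub_left hle c
        rwa [ENNReal.sub_half hcfin] at this
      have h2 : c - a ≤ (c - a) + (a - c) := le_self_add
      exact absurd (lt_of_le_of_lt (h1.trans h2) hlt) (lt_irrefl _)
    -- but atoms of positive mass form a countable set
    have hcount : Set.Countable {x : G | 0 < μ {x}} := by
      have := Measure.countable_meas_level_set_pos (μ := μ) (g := id) measurable_id
      simpa [Set.setOf_eq_eq_singleton] using this
    have hsub : (fun t => t + x₀) '' P ⊆ {x : G | 0 < μ {x}} := by
      rintro _ ⟨t, ht, rfl⟩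
      exact lt_of_le_of_lt zero_le (hatom t ht)
    have hPc : P.Countable := by
      have himg : ((fun t => t + x₀) '' P).Countable := hcount.mono hsub
      exact Set.countable_of_injective_of_countable_image
        ((add_left_injective x₀).injOn) himg
    exact hPuncount hPc
  refine Measure.ext fun A hA => ?_
  rw [hpp A hA]
  simp [hsing]
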